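/- For every n ≥ 1 and every k = (k_1,…,k_n) ∈ ℤ^n, sgt(k) = Σ_A (−1)^{m(A)}, where the sum is over all triangular arrays A = (A_{i,j})_{1 ≤ j ≤ i ≤ n} of integers with bottom row A_{n,i} = k_i for 1 ≤ i ≤ n such that for all 1 ≤ j ≤ i < n either A_{i+1,j} ≤ A_{i,j} ≤ A_{i+1,j+1} or A_{i+1,j} > A_{i,j} > A_{i+1,j+1}, and m(A) is the number of pairs (i,j) with 1 ≤ j < i ≤ n and A_{i,j} > A_{i,j+1}. (This is a finite sum, since all entries of such an array lie between the minimum and the maximum of k.) -/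

import Mathlib

/-- The signed sum `Σ'_{l=a..b} f(l)`: the ordinary sum over `[a,b]` when `a ≤ b`,
and `-Σ_{l=b+1}^{a-1} f(l)` when `a > b`. -/
noncomputable def ssum (a b : ℤ) (f : ℤ → ℤ) : ℤ :=
  if a ≤ b then ∑ l ∈ Finset.Icc a b, f l else -∑ l ∈ Finset.Icc (b + 1) (a - 1), f l

/-- Iterated signed sum over the box `[a 0, b 0] × ⋯ × [a (m-1), b (m-1)]`,
one signed sum per coordinate. -/
noncomputable def sbox : (m : ℕ) → (Fin m → ℤ) → (Fin m → ℤ) → ((Fin m → ℤ) → ℤ) → ℤ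
  | 0, _, _, f => f Fin.elim0
  | m + 1, a, b, f =>
      ssum (a 0) (b 0) fun l =>
        sbox m (fun i => a i.succ) (fun i => b i.succ) fun t => f (Fin.cons l t)

/-- The signed Gelfand–Tsetlin count: `sgt k = 1` for tuples of length `≤ 1`, and
`sgt (k_1,…,k_n) = Σ'_{l_1=k_1..k_2} ⋯ Σ'_{l_{n-1}=k_{n-1}..k_n} sgt (l_1,…,l_{n-1})`. -/
noncomputable def sgt : (n : ℕ) → (Fin n → ℤ) → ℤ
  | 0, _ => 1
  | 1, _ => 1
  | n + 2, k => sbox (n + 1) (fun i => k i.castSucc) (fun i => k i.succ) (sgt (n + 1))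

/-- A triangular array of integers `(T_{i,j})_{1 ≤ j ≤ i ≤ n}` (0-indexed: row `i` has
`i+1` entries). -/
abbrev TriArray (n : ℕ) := (i : Fin n) → Fin (i.1 + 1) → ℤ

/-- The bottom row of the triangular array `T` is `k`. -/
def BottomRow {n : ℕ} (T : TriArray n) (k : Fin n → ℤ) : Prop :=
  ∀ (i : Fin n) (h : i.1 + 1 = n) (j : Fin (i.1 + 1)), T i j = k (Fin.cast h j)

/-- `T` is a (classical) monotone triangle with bottom row `k`: entries increase weakly
along both diagonals and strictly along rows. -/
def IsMT {n : ℕ} (T : TriArray n) (k : Fin n → ℤ) : Prop :=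
  BottomRow T k ∧
  (∀ (i : Fin n) (h : i.1 + 1 < n) (j : Fin (i.1 + 1)),
    T ⟨i.1 + 1, h⟩ j.castSucc ≤ T i j ∧ T i j ≤ T ⟨i.1 + 1, h⟩ j.succ) ∧
  (∀ (i : Fin n) (j : Fin i.1), T i j.castSucc < T i j.succ)

/-- The sequence `l = (l_1,…,l_m)` interlaces `k = (k_1,…,k_{m+1})`, written `l ≺ k`. -/
def Interlaces {m : ℕ} (l : Fin m → ℤ) (k : Fin (m + 1) → ℤ) : Prop :=
  -- (1) each `l_i` lies in the closed interval between `k_i` and `k_{i+1}`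
  (∀ i : Fin m, min (k i.castSucc) (k i.succ) ≤ l i ∧ l i ≤ max (k i.castSucc) (k i.succ)) ∧
  -- (2) if `k_{i-1} ≤ k_i ≤ k_{i+1}`, then `l_{i-1}` and `l_i` are not both `k_i`
  (∀ (j : Fin m) (h : j.1 + 1 < m),
    k j.castSucc ≤ k j.succ → k j.succ ≤ k ⟨j.1 + 2, Nat.succ_lt_succ h⟩ →
      ¬(l j = k j.succ ∧ l ⟨j.1 + 1, h⟩ = k j.succ)) ∧
  -- (3) if `k_i > l_i = k_{i+1}`, then `i ≤ n-2` and `l_{i+1} = l_i`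
  (∀ i : Fin m, k i.castSucc > l i → l i = k i.succ →
      ∃ h : i.1 + 1 < m, l ⟨i.1 + 1, h⟩ = l i) ∧
  -- (4) if `k_i = l_i > k_{i+1}`, then `i ≥ 2` and `l_{i-1} = l_i`
  (∀ i : Fin m, k i.castSucc = l i → l i > k i.succ →
      0 < i.1 ∧ l ⟨i.1 - 1, Nat.lt_of_le_of_lt (Nat.sub_le _ _) i.isLt⟩ = l i)

/-- `T` is a generalized monotone triangle with bottom row `k`: each row interlaces the
next one, and the bottom row is `k`. -/
def IsGMT {n : ℕ} (T : TriArray n) (k : Fin n → ℤ) : Prop :=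
  BottomRow T k ∧
  ∀ (i : Fin n) (h : i.1 + 1 < n), Interlaces (T i) (T ⟨i.1 + 1, h⟩)

/-- The number of strict descents in the rows of `T`, i.e. the number of pairs `(i,j)`
with `T_{i,j} > T_{i,j+1}`. -/
def rowDescents {n : ℕ} (T : TriArray n) : ℕ :=
  ∑ i : Fin n, (Finset.univ.filter fun j : Fin i.1 => T i j.succ < T i j.castSucc).card

/-- The number of `(i,j)` with `T_{i,j} > T_{i-1,j} = T_{i,j+1} = T_{i-1,j+1} > T_{i,j+2}`. -/
def specialCount {n : ℕ} (T : TriArray n) : ℕ :=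
  ∑ i : Fin n,
    (Finset.univ.filter fun j : Fin (i.1 - 1) =>
      T i ⟨j.1, by have := j.isLt; omega⟩ >
          T ⟨i.1 - 1, Nat.lt_of_le_of_lt (Nat.sub_le _ _) i.isLt⟩ j.castSucc ∧
      T ⟨i.1 - 1, Nat.lt_of_le_of_lt (Nat.sub_le _ _) i.isLt⟩ j.castSucc =
          T i ⟨j.1 + 1, by have := j.isLt; omega⟩ ∧
      T i ⟨j.1 + 1, by have := j.isLt; omega⟩ =
          T ⟨i.1 - 1, Nat.lt_of_le_of_lt (Nat.sub_le _ _) i.isLt⟩ j.succ ∧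
      T ⟨i.1 - 1, Nat.lt_of_le_of_lt (Nat.sub_le _ _) i.isLt⟩ j.succ >
          T i ⟨j.1 + 2, by have := j.isLt; omega⟩).card

/-- The sign of a generalized monotone triangle. -/
def gmtSign {n : ℕ} (T : TriArray n) : ℤ :=
  (-1) ^ (rowDescents T + specialCount T)

/-- The signed enumeration of generalized monotone triangles with bottom row `k`
(a finite sum, since all entries of such a triangle lie between the minimum and the
maximum of `k`). -/
noncomputable def smt {n : ℕ} (k : Fin n → ℤ) : ℤ :=
  ∑ᶠ T ∈ {T : TriArray n | IsGMT T k}, gmtSign T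

/-- A (generalized) Gelfand–Tsetlin pattern with bottom row `k`: a triangular array such
that each entry is between its two lower neighbours, either weakly increasing or strictly
decreasing, i.e. `A_{i+1,j} ≤ A_{i,j} ≤ A_{i+1,j+1}` or `A_{i+1,j} > A_{i,j} > A_{i+1,j+1}`. -/
def IsGTPattern {n : ℕ} (A : TriArray n) (k : Fin n → ℤ) : Prop :=
  BottomRow A k ∧
  ∀ (i : Fin n) (h : i.1 + 1 < n) (j : Fin (i.1 + 1)),
    (A ⟨i.1 + 1, h⟩ j.castSucc ≤ A i j ∧ A i j ≤ A ⟨i.1 + 1, h⟩ j.succ) ∨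
    (A ⟨i.1 + 1, h⟩ j.castSucc > A i j ∧ A i j > A ⟨i.1 + 1, h⟩ j.succ)


/-! ### Auxiliary machinery for the proof -/

open Finset

/-- One-coordinate summation range of a signed sum. -/
noncomputable def coordI (a b : ℤ) : Finset ℤ := if a ≤ b then Finset.Icc a b else Finset.Icc (b + 1) (a - 1)

/-- One-coordinate sign of a signed sum. -/
def sgn1 (a b : ℤ) : ℤ := if a ≤ b then 1 else -1

lemma ssum_eq (a b : ℤ) (f : ℤ → ℤ) : ssum a b f = sgn1 a b * ∑ l ∈ coordI a b, f l := by
  unfold ssum sgn1 coordI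
  split_ifs <;> ring

/-- The box of admissible rows. -/
noncomputable def boxF {m : ℕ} (a b : Fin m → ℤ) : Finset (Fin m → ℤ) :=
  Fintype.piFinset fun i => coordI (a i) (b i)

lemma sum_piFinset_cons {m : ℕ} (t : Fin (m + 1) → Finset ℤ) (f : (Fin (m + 1) → ℤ) → ℤ) :
    ∑ x ∈ Fintype.piFinset t, f x
      = ∑ l ∈ t 0, ∑ y ∈ Fintype.piFinset (fun i => t i.succ), f (Fin.cons l y) := by
  classical
  have h := Finset.filter_piFinset_eq_map_consEquiv t (fun _ => True)
  simp only [Finset.filter_true] at h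
  rw [h, Finset.sum_map, Finset.sum_product]
  rfl

lemma sbox_eq : ∀ (m : ℕ) (a b : Fin m → ℤ) (f : (Fin m → ℤ) → ℤ),
    sbox m a b f = (∏ i, sgn1 (a i) (b i)) * ∑ x ∈ boxF a b, f x := by
  intro m
  induction m with
  | zero =>
      intro a b f
      have hbox : (boxF a b) = {(Fin.elim0 : Fin 0 → ℤ)} := by
        apply Finset.eq_singleton_iff_unique_mem.mpr
        constructor
        · simp [boxF, Fintype.mem_piFinset]
          exact Subsingleton.elim _ _
        · intro x _
          exact Subsingleton.elim _ _
      simp [sbox, hbox]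
  | succ m ih =>
      intro a b f
      show ssum (a 0) (b 0) (fun l => sbox m _ _ fun t => f (Fin.cons l t)) = _
      rw [ssum_eq]
      simp only [ih]
      rw [Fin.prod_univ_succ]
      unfold boxF
      rw [sum_piFinset_cons (fun i => coordI (a i) (b i)) f]
      rw [← Finset.mul_sum]
      ring

lemma mem_coordI {a b x : ℤ} :
    x ∈ coordI a b ↔ (a ≤ x ∧ x ≤ b) ∨ (a > x ∧ x > b) := by
  unfold coordI
  split_ifs with h <;> simp only [Finset.mem_Icc] <;> omega

/-- Extend a triangle by a new bottom row `k`. -/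
def extT {n : ℕ} (k : Fin (n + 2) → ℤ) (A' : TriArray (n + 1)) : TriArray (n + 2) :=
  fun i j => if h : i.1 < n + 1 then A' ⟨i.1, h⟩ j else k ⟨j.1, by omega⟩

/-- Remove the bottom row of a triangle. -/
def resT {n : ℕ} (A : TriArray (n + 2)) : TriArray (n + 1) :=
  fun i j => A ⟨i.1, by omega⟩ j

/-- The next-to-bottom row of a triangle. -/
def lastR {n : ℕ} (A : TriArray (n + 2)) : Fin (n + 1) → ℤ :=
  fun j => A ⟨n, by omega⟩ j

lemma bottomRow_eq {n : ℕ} {A : TriArray (n + 1)} {l : Fin (n + 1) → ℤ}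
    (h : BottomRow A l) : ∀ j : Fin (n + 1), A ⟨n, Nat.lt_succ_self n⟩ j = l j := by
  intro j
  exact h ⟨n, Nat.lt_succ_self n⟩ rfl j

lemma extT_inj {n : ℕ} (k : Fin (n + 2) → ℤ) : Function.Injective (extT k) := by
  intro A' B' h
  funext i j
  have := congrFun (congrFun h ⟨i.1, by omega⟩) j
  simpa [extT, i.2] using this

lemma decomp {n : ℕ} (k : Fin (n + 2) → ℤ) (A : TriArray (n + 2)) :
    IsGTPattern A k ↔
      ∃ l ∈ boxF (fun i : Fin (n + 1) => k i.castSucc) (fun i => k i.succ),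
        ∃ A', IsGTPattern A' l ∧ extT k A' = A := by
  constructor
  · rintro ⟨hb, hc⟩
    refine ⟨lastR A, ?_, resT A, ⟨?_, ?_⟩, ?_⟩
    · rw [boxF, Fintype.mem_piFinset]
      intro j
      rw [mem_coordI]
      have h2 := hc ⟨n, by omega⟩ (show n + 1 < n + 2 by omega) j
      have hb1 := hb ⟨n + 1, by omega⟩ rfl j.castSucc
      have hb2 := hb ⟨n + 1, by omega⟩ rfl j.succ
      have e1 : k (Fin.cast rfl (j.castSucc : Fin (n + 2))) = k j.castSucc := rfl
      have e2 : k (Fin.cast rfl (j.succ : Fin (n + 2))) = k j.succ := rfl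
      rw [e1] at hb1; rw [e2] at hb2
      show (k j.castSucc ≤ A ⟨n, by omega⟩ j ∧ _) ∨ _
      rw [← hb1, ← hb2] at *
      exact h2
    · -- bottom row of resT A is lastR A
      intro i h j
      obtain ⟨iv, hiv⟩ := i
      have h' : iv + 1 = n + 1 := h
      have hn : n = iv := by omega
      subst hn
      rfl
    · -- inner condition of resT A
      intro i h j
      exact hc ⟨i.1, by omega⟩ (show i.1 + 1 < n + 2 by omega) j
    · funext i j
      by_cases h : i.1 < n + 1
      · simp only [extT, dif_pos h]
        rfl
      · simp only [extT, dif_neg h]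
        have hi : i.1 + 1 = n + 2 := by omega
        have := hb i hi j
        rw [this]
        rfl
  · rintro ⟨l, hl, A', ⟨hb', hc'⟩, rfl⟩
    constructor
    · intro i h j
      have hi : ¬ i.1 < n + 1 := by omega
      simp only [extT, dif_neg hi]
      rfl
    · intro i h j
      have hi : i.1 < n + 1 := by omega
      by_cases h2 : i.1 + 1 < n + 1
      · have := hc' ⟨i.1, hi⟩ h2 j
        simp only [extT, dif_pos hi, dif_pos h2]
        exact this
      · -- i.1 = n : compare with bottom row k
        obtain ⟨iv, hiv⟩ := i
        have h2' : ¬ iv + 1 < n + 1 := h2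
        have hi' : iv < n + 1 := hi
        have hn : n = iv := by omega
        subst hn
        simp only [extT, dif_pos hi, dif_neg (show ¬ n + 1 < n + 1 by omega)]
        rw [boxF, Fintype.mem_piFinset] at hl
        have hmem := hl j
        rw [mem_coordI] at hmem
        have hbl : A' ⟨n, hi⟩ j = l j := bottomRow_eq hb' j
        rw [hbl]
        show (k j.castSucc ≤ l j ∧ l j ≤ k j.succ) ∨ (k j.castSucc > l j ∧ l j > k j.succ)
        exact hmem

lemma gt_finite : ∀ (n : ℕ) (k : Fin (n + 1) → ℤ),
    {A : TriArray (n + 1) | IsGTPattern A k}.Finite := by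
  intro n
  induction n with
  | zero =>
      intro k
      apply Set.Finite.subset (Set.finite_singleton
        (fun i j => k ⟨j.1, by omega⟩ : TriArray 1))
      intro A hA
      simp only [Set.mem_singleton_iff]
      funext i j
      obtain ⟨iv, hiv⟩ := i
      have : iv = 0 := by omega
      subst this
      exact hA.1 ⟨0, hiv⟩ rfl j
  | succ n ih =>
      intro k
      apply Set.Finite.subset
        (Set.Finite.biUnion (boxF (fun i : Fin (n + 1) => k i.castSucc)
          (fun i => k i.succ)).finite_toSet
          (fun l _ => ((ih l).image (extT k))))
      intro A hA
      rw [Set.mem_setOf_eq, decomp] at hA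
      obtain ⟨l, hl, A', hA', hext⟩ := hA
      exact Set.mem_biUnion hl ⟨A', hA', hext⟩

/-- Number of descents in the bottom row `k`. -/
def dcount {n : ℕ} (k : Fin (n + 1) → ℤ) : ℕ :=
  (Finset.univ.filter fun j : Fin n => k j.succ < k j.castSucc).card

lemma rowDescents_extT {n : ℕ} (k : Fin (n + 2) → ℤ) (A' : TriArray (n + 1)) :
    rowDescents (extT k A') = rowDescents A' + dcount k := by
  unfold rowDescents
  rw [Fin.sum_univ_castSucc]
  congr 1
  · apply Finset.sum_congr rfl
    intro i _
    congr 1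
    apply Finset.filter_congr
    intro j _
    have hi : (i.castSucc : Fin (n + 2)).1 < n + 1 := i.2
    simp only [extT, dif_pos hi]
    exact Iff.rfl
  · unfold dcount
    congr 1
    apply Finset.filter_congr
    intro j _
    have hi : ¬ (Fin.last (n + 1)).1 < n + 1 := by simp
    simp only [extT, dif_neg hi]

lemma prod_sgn1 {n : ℕ} (k : Fin (n + 2) → ℤ) :
    (∏ i : Fin (n + 1), sgn1 (k i.castSucc) (k i.succ)) = (-1 : ℤ) ^ dcount k := by
  unfold sgn1 dcount
  rw [show (∏ i : Fin (n + 1), if k i.castSucc ≤ k i.succ then (1 : ℤ) else -1)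
      = ∏ i : Fin (n + 1), if k i.succ < k i.castSucc then (-1 : ℤ) else 1 by
    apply Finset.prod_congr rfl; intro i _; split_ifs <;> omega]
  rw [Finset.prod_ite, Finset.prod_const, Finset.prod_const, one_pow, mul_one]

/-- For every `n ≥ 1` and `k ∈ ℤ^n`, `sgt k` equals the signed enumeration of
(generalized) Gelfand–Tsetlin patterns with bottom row `k`, each counted with sign
`(-1)^{m(A)}` where `m(A)` is the number of strict descents in the rows of `A`
(a finite sum, since all entries lie between the minimum and the maximum of `k`). -/
theorem sgt_eq_signed_count (n : ℕ) (k : Fin (n + 1) → ℤ) :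
    sgt (n + 1) k =
      ∑ᶠ A ∈ {A : TriArray (n + 1) | IsGTPattern A k}, (-1 : ℤ) ^ rowDescents A := by
  have hconv : ∀ (m : ℕ) (l : Fin (m + 1) → ℤ),
      (∑ᶠ A ∈ {A : TriArray (m + 1) | IsGTPattern A l}, (-1 : ℤ) ^ rowDescents A)
        = ∑ A ∈ (gt_finite m l).toFinset, (-1 : ℤ) ^ rowDescents A := by
    intro m l
    exact finsum_mem_eq_finite_toFinset_sum _ (gt_finite m l)
  induction n with
  | zero =>
    have hset : {A : TriArray 1 | IsGTPattern A k}
        = {(fun i j => k ⟨j.1, by omega⟩ : TriArray 1)} := by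
      ext A
      simp only [Set.mem_setOf_eq, Set.mem_singleton_iff]
      constructor
      · intro hA
        funext i j
        obtain ⟨iv, hiv⟩ := i
        have h0 : (0 : ℕ) = iv := by omega
        subst h0
        exact hA.1 ⟨0, hiv⟩ rfl j
      · intro hA
        subst hA
        constructor
        · intro i h j
          rfl
        · intro i h j
          exact absurd h (by have := i.2; omega)
    rw [hset, finsum_mem_singleton]
    have hrd : rowDescents (fun i j => k ⟨j.1, by omega⟩ : TriArray 1) = 0 := by
      unfold rowDescents
      apply Finset.sum_eq_zero
      intro i _
      obtain ⟨iv, hiv⟩ := i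
      have h0 : (0 : ℕ) = iv := by omega
      subst h0
      exact Finset.card_eq_zero.mpr (Finset.eq_empty_of_isEmpty _)
    rw [hrd]
    norm_num [sgt]
  | succ n ih =>
    have hsgt : sgt (n + 2) k
        = sbox (n + 1) (fun i => k i.castSucc) (fun i => k i.succ) (sgt (n + 1)) := rfl
    rw [hsgt, sbox_eq, prod_sgn1, hconv (n + 1) k]
    have hdisj : Set.PairwiseDisjoint
        (↑(boxF (fun i : Fin (n + 1) => k i.castSucc) (fun i => k i.succ)))
        (fun l => ((gt_finite n l).toFinset).image (extT k)) := by
      intro l1 h1 l2 h2 hne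
      apply Finset.disjoint_left.mpr
      intro A hA1 hA2
      simp only [Finset.mem_image, Set.Finite.mem_toFinset, Set.mem_setOf_eq] at hA1 hA2
      obtain ⟨A1, hA1m, he1⟩ := hA1
      obtain ⟨A2, hA2m, he2⟩ := hA2
      apply hne
      have hA12 : A1 = A2 := extT_inj k (he1.trans he2.symm)
      subst hA12
      funext j
      exact (bottomRow_eq hA1m.1 j).symm.trans (bottomRow_eq hA2m.1 j)
    have hdecomp : (gt_finite (n + 1) k).toFinset
        = (boxF (fun i : Fin (n + 1) => k i.castSucc) (fun i => k i.succ)).biUnion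
            (fun l => ((gt_finite n l).toFinset).image (extT k)) := by
      ext A
      rw [Set.Finite.mem_toFinset, Set.mem_setOf_eq, decomp]
      simp [Set.Finite.mem_toFinset]
    rw [hdecomp, Finset.sum_biUnion hdisj]
    have hinner : ∀ l ∈ boxF (fun i : Fin (n + 1) => k i.castSucc) (fun i => k i.succ),
        (∑ A ∈ ((gt_finite n l).toFinset).image (extT k), (-1 : ℤ) ^ rowDescents A)
          = (-1 : ℤ) ^ dcount k * ∑ A' ∈ (gt_finite n l).toFinset, (-1 : ℤ) ^ rowDescents A' := by
      intro l _
      rw [Finset.sum_image (fun x _ y _ h => extT_inj k h), Finset.mul_sum]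
      apply Finset.sum_congr rfl
      intro A' _
      rw [rowDescents_extT, pow_add, mul_comm]
    rw [Finset.sum_congr rfl hinner, ← Finset.mul_sum]
    congr 1
    apply Finset.sum_congr rfl
    intro l _
    rw [ih l, hconv n l]
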